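/- arXiv:2507.10425 — 2 statements merged into one kernel-verified Lean document; each statement's English description precedes it below -/
import Mathlib

section
/- For probability measures P and Q on ℝ with CDFs F_P and F_Q, the 1-Wasserstein distance satisfies W₁(P,Q) = ∫_ℝ |F_P(t) − F_Q(t)| dt, provided both measures have finite first moments. -/
open MeasureTheory Set

/-- CDF of a measure on ℝ. -/
noncomputable def F (μ : Measure ℝ) (t : ℝ) : ℝ := (μ (Iic t)).toReal

/-- 1-Wasserstein distance: infimum over couplings of `P` and `Q` of the expected distance. -/
noncomputable def W1 (P Q : Measure ℝ) : ℝ :=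
  ⨅ π : {π : Measure (ℝ × ℝ) // π.map Prod.fst = P ∧ π.map Prod.snd = Q},
    ∫ p, |p.1 - p.2| ∂(π : Measure (ℝ × ℝ))

open Filter Topology ProbabilityTheory
open scoped ENNReal

namespace W1Aux

/-- Quantile function of a measure. -/
noncomputable def G (μ : Measure ℝ) (u : ℝ) : ℝ := sInf {x | u ≤ cdf μ x}

variable {μ : Measure ℝ} [IsProbabilityMeasure μ]

lemma F_eq (t : ℝ) : F μ t = cdf μ t := (cdf_eq_real μ t).symm

lemma F_mono : Monotone (F μ) := fun s t h =>
  ENNReal.toReal_mono (measure_ne_top μ _) (measure_mono (Iic_subset_Iic.2 h))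

lemma Gset_nonempty {u : ℝ} (hu : u < 1) : {x | u ≤ cdf μ x}.Nonempty :=
  ((tendsto_cdf_atTop μ).eventually_const_le hu).exists

lemma Gset_bddBelow {u : ℝ} (hu : 0 < u) : BddBelow {x | u ≤ cdf μ x} := by
  obtain ⟨x₀, hx₀⟩ := ((tendsto_cdf_atBot μ).eventually_lt_const hu).exists
  refine ⟨x₀, fun x hx => ?_⟩
  by_contra h
  push_neg at h
  exact absurd (hx.trans (monotone_cdf μ h.le)) hx₀.not_ge

lemma G_le_iff {u : ℝ} (hu : u ∈ Ioo (0:ℝ) 1) (t : ℝ) :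
    G μ u ≤ t ↔ u ≤ cdf μ t := by
  constructor
  · intro h
    have hs : ∀ s ∈ Ioi t, u ≤ cdf μ s := by
      intro s hs
      obtain ⟨x, hx, hxs⟩ := (csInf_lt_iff (Gset_bddBelow hu.1) (Gset_nonempty hu.2)).1
        (lt_of_le_of_lt h hs)
      exact hx.trans (monotone_cdf μ hxs.le)
    have htend : Tendsto (cdf μ) (𝓝[>] t) (𝓝 (cdf μ t)) :=
      ((cdf μ).right_continuous t).tendsto.mono_left (nhdsWithin_mono _ Ioi_subset_Ici_self)
    exact ge_of_tendsto htend (eventually_nhdsWithin_of_forall hs)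
  · intro h
    exact csInf_le (Gset_bddBelow hu.1) h

lemma G_mono : MonotoneOn (G μ) (Ioo (0:ℝ) 1) := fun u hu v hv huv =>
  csInf_le_csInf (Gset_bddBelow hu.1) (Gset_nonempty hv.2) (fun _ hx => le_trans huv hx)

instance : IsProbabilityMeasure (volume.restrict (Ioo (0:ℝ) 1)) :=
  ⟨by rw [Measure.restrict_apply MeasurableSet.univ, univ_inter, Real.volume_Ioo]; norm_num⟩

lemma G_aemeasurable : AEMeasurable (G μ) (volume.restrict (Ioo (0:ℝ) 1)) :=
  aemeasurable_restrict_of_monotoneOn measurableSet_Ioo G_mono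

lemma vol_Ioc_inter {m M : ℝ} (h0 : 0 ≤ m) (hmM : m ≤ M) (h1 : M ≤ 1) :
    volume (Ioc m M ∩ Ioo 0 1) = ENNReal.ofReal (M - m) := by
  rcases eq_or_lt_of_le h1 with h | h
  · have : Ioc m M ∩ Ioo 0 1 = Ioo m M := by
      subst h
      ext u
      simp only [mem_inter_iff, mem_Ioc, mem_Ioo]
      exact ⟨fun ⟨⟨ha, _⟩, ⟨_, hb⟩⟩ => ⟨ha, hb⟩,
        fun ⟨ha, hb⟩ => ⟨⟨ha, hb.le⟩, ⟨lt_of_le_of_lt h0 ha, hb⟩⟩⟩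
    rw [this, Real.volume_Ioo]
  · have : Ioc m M ∩ Ioo 0 1 = Ioc m M := by
      refine inter_eq_left.2 fun u hu => ⟨lt_of_le_of_lt h0 hu.1, lt_of_le_of_lt hu.2 h⟩
    rw [this, Real.volume_Ioc]

lemma vol_Iic_inter {c : ℝ} (h0 : 0 ≤ c) (h1 : c ≤ 1) :
    volume (Iic c ∩ Ioo 0 1) = ENNReal.ofReal c := by
  have : Iic c ∩ Ioo 0 1 = Ioc 0 c ∩ Ioo 0 1 := by
    ext u
    simp only [mem_inter_iff, mem_Iic, mem_Ioc, mem_Ioo]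
    tauto
  rw [this, vol_Ioc_inter le_rfl h0 h1, sub_zero]

lemma map_G : (volume.restrict (Ioo (0:ℝ) 1)).map (G μ) = μ := by
  refine Measure.ext_of_Iic _ _ fun t => ?_
  rw [Measure.map_apply_of_aemeasurable G_aemeasurable measurableSet_Iic, ← ofReal_cdf μ t,
    Measure.restrict_apply' measurableSet_Ioo]
  have hset : G μ ⁻¹' Iic t ∩ Ioo 0 1 = Iic (cdf μ t) ∩ Ioo 0 1 := by
    ext u
    simp only [mem_inter_iff, mem_preimage, mem_Iic]
    exact and_congr_left fun hu => G_le_iff hu t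
  rw [hset, vol_Iic_inter (cdf_nonneg μ t) (cdf_le_one μ t)]

/-- the "symmetric difference at level t" set -/
def Sd (t : ℝ) : Set (ℝ × ℝ) := {p | (p.1 ≤ t ∧ t < p.2) ∨ (p.2 ≤ t ∧ t < p.1)}

lemma Sd_meas (t : ℝ) : MeasurableSet (Sd t) :=
  (((measurableSet_le measurable_fst measurable_const).inter
      (measurableSet_lt measurable_const measurable_snd)).union
    ((measurableSet_le measurable_snd measurable_const).inter
      (measurableSet_lt measurable_const measurable_fst)))

lemma mem_Sd_iff (t : ℝ) (p : ℝ × ℝ) :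
    p ∈ Sd t ↔ t ∈ Ico (min p.1 p.2) (max p.1 p.2) := by
  rcases le_total p.1 p.2 with h | h
  · rw [min_eq_left h, max_eq_right h]
    constructor
    · rintro (⟨h1, h2⟩ | ⟨h1, h2⟩)
      · exact ⟨h1, h2⟩
      · exact absurd (h2.trans_le h) (not_lt.2 h1)
    · rintro ⟨h1, h2⟩; exact Or.inl ⟨h1, h2⟩
  · rw [min_eq_right h, max_eq_left h]
    constructor
    · rintro (⟨h1, h2⟩ | ⟨h1, h2⟩)
      · exact absurd (h2.trans_le h) (not_lt.2 h1)
      · exact ⟨h1, h2⟩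
    · rintro ⟨h1, h2⟩; exact Or.inr ⟨h1, h2⟩

lemma key (π : Measure (ℝ × ℝ)) [SFinite π] :
    ∫⁻ p, ENNReal.ofReal |p.1 - p.2| ∂π = ∫⁻ t, π (Sd t) := by
  have h1 : ∀ p : ℝ × ℝ, ENNReal.ofReal |p.1 - p.2|
      = ∫⁻ t, (Sd t).indicator (fun _ => (1:ℝ≥0∞)) p := by
    intro p
    have : ∀ t : ℝ, (Sd t).indicator (fun _ => (1:ℝ≥0∞)) p
        = (Ico (min p.1 p.2) (max p.1 p.2)).indicator (fun _ => (1:ℝ≥0∞)) t := by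
      intro t
      by_cases h : p ∈ Sd t
      · rw [indicator_of_mem h, indicator_of_mem ((mem_Sd_iff t p).1 h)]
      · rw [indicator_of_notMem h,
          indicator_of_notMem (fun hc => h ((mem_Sd_iff t p).2 hc))]
    simp_rw [this]
    exact ((lintegral_indicator_one measurableSet_Ico).trans
      (by rw [Real.volume_Ico, max_sub_min_eq_abs, abs_sub_comm])).symm
  have hU : MeasurableSet {q : (ℝ × ℝ) × ℝ | q.1 ∈ Sd q.2} := by
    refine (((measurableSet_le (measurable_fst.fst) measurable_snd).inter
      (measurableSet_lt measurable_snd (measurable_fst.snd))).union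
      (((measurableSet_le (measurable_fst.snd) measurable_snd).inter
      (measurableSet_lt measurable_snd (measurable_fst.fst)))))
  have hmeas : AEMeasurable
      (Function.uncurry fun (p : ℝ × ℝ) (t : ℝ) => (Sd t).indicator (fun _ => (1:ℝ≥0∞)) p)
      (π.prod volume) := by
    have : (Function.uncurry fun (p : ℝ × ℝ) (t : ℝ) => (Sd t).indicator (fun _ => (1:ℝ≥0∞)) p)
        = {q : (ℝ × ℝ) × ℝ | q.1 ∈ Sd q.2}.indicator (fun _ => (1:ℝ≥0∞)) := by
      ext q
      by_cases h : q.1 ∈ Sd q.2 <;>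
        simp [Function.uncurry, indicator, h, Set.mem_setOf_eq]
    rw [this]
    exact (measurable_const.indicator hU).aemeasurable
  calc ∫⁻ p, ENNReal.ofReal |p.1 - p.2| ∂π
      = ∫⁻ p, ∫⁻ t, (Sd t).indicator (fun _ => (1:ℝ≥0∞)) p ∂volume ∂π :=
        lintegral_congr h1
    _ = ∫⁻ t, ∫⁻ p, (Sd t).indicator (fun _ => (1:ℝ≥0∞)) p ∂π ∂volume :=
        lintegral_lintegral_swap hmeas
    _ = ∫⁻ t, π (Sd t) := lintegral_congr fun t => lintegral_indicator_one (Sd_meas t)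

end W1Aux

namespace W1Aux

lemma aux_abs {x y z : ℝ≥0∞} (hx : x ≠ ⊤) (hy : y ≠ ⊤) (h1 : x ≤ y + z) (h2 : y ≤ x + z) :
    ENNReal.ofReal |x.toReal - y.toReal| ≤ z := by
  rcases eq_top_or_lt_top z with rfl | hz
  · exact le_top
  rw [ENNReal.ofReal_le_iff_le_toReal hz.ne, abs_sub_le_iff]
  have e1 : x.toReal ≤ y.toReal + z.toReal := by
    have := ENNReal.toReal_mono (by simp [hy, hz.ne]) h1
    rwa [ENNReal.toReal_add hy hz.ne] at this
  have e2 : y.toReal ≤ x.toReal + z.toReal := by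
    have := ENNReal.toReal_mono (by simp [hx, hz.ne]) h2
    rwa [ENNReal.toReal_add hx hz.ne] at this
  constructor <;> linarith

lemma coupling_Sd_ge {P Q : Measure ℝ} [IsProbabilityMeasure P] [IsProbabilityMeasure Q]
    (π : Measure (ℝ × ℝ)) [IsProbabilityMeasure π]
    (h1 : π.map Prod.fst = P) (h2 : π.map Prod.snd = Q) (t : ℝ) :
    ENNReal.ofReal |F P t - F Q t| ≤ π (Sd t) := by
  have hA : P (Iic t) = π {p : ℝ × ℝ | p.1 ≤ t} := by
    rw [← h1, Measure.map_apply measurable_fst measurableSet_Iic]; rfl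
  have hB : Q (Iic t) = π {p : ℝ × ℝ | p.2 ≤ t} := by
    rw [← h2, Measure.map_apply measurable_snd measurableSet_Iic]; rfl
  set A : Set (ℝ × ℝ) := {p | p.1 ≤ t} with hAdef
  set B : Set (ℝ × ℝ) := {p | p.2 ≤ t} with hBdef
  have hsub1 : A \ B ⊆ Sd t := fun p hp => Or.inl ⟨hp.1, not_le.1 hp.2⟩
  have hsub2 : B \ A ⊆ Sd t := fun p hp => Or.inr ⟨hp.1, not_le.1 hp.2⟩
  have keyle : ∀ {S T : Set (ℝ × ℝ)}, T \ S ⊆ Sd t → π T ≤ π S + π (Sd t) :=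
    fun {S T} h => (measure_le_inter_add_diff π T S).trans
      (add_le_add (measure_mono inter_subset_right) (measure_mono h))
  have hFP : F P t = (π A).toReal := by rw [F, hA]
  have hFQ : F Q t = (π B).toReal := by rw [F, hB]
  rw [hFP, hFQ]
  exact aux_abs (measure_ne_top π A) (measure_ne_top π B)
    ((keyle hsub1).trans_eq (add_comm _ _) |>.trans_eq (add_comm _ _))
    ((keyle hsub2).trans_eq (add_comm _ _) |>.trans_eq (add_comm _ _))

lemma quantile_Sd {P Q : Measure ℝ} [IsProbabilityMeasure P] [IsProbabilityMeasure Q] (t : ℝ) :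
    ((volume.restrict (Ioo (0:ℝ) 1)).map (fun u => (G P u, G Q u))) (Sd t)
      = ENNReal.ofReal |F P t - F Q t| := by
  have hpair : AEMeasurable (fun u => (G P u, G Q u)) (volume.restrict (Ioo (0:ℝ) 1)) :=
    G_aemeasurable.prodMk G_aemeasurable
  rw [Measure.map_apply_of_aemeasurable hpair (Sd_meas t),
    Measure.restrict_apply' measurableSet_Ioo]
  set a := cdf P t with ha
  set b := cdf Q t with hb
  have hset : (fun u => (G P u, G Q u)) ⁻¹' Sd t ∩ Ioo 0 1
      = Ioc (min a b) (max a b) ∩ Ioo 0 1 := by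
    ext u
    simp only [mem_inter_iff, mem_preimage, mem_Ioc, mem_Ioo]
    refine and_congr_left fun hu => ?_
    have hP1 := G_le_iff (μ := P) hu t
    have hQ1 := G_le_iff (μ := Q) hu t
    have hSd : (G P u, G Q u) ∈ Sd t ↔ (G P u ≤ t ∧ t < G Q u) ∨ (G Q u ≤ t ∧ t < G P u) :=
      Iff.rfl
    rw [hSd]
    constructor
    · rintro (⟨hx, hy⟩ | ⟨hx, hy⟩)
      · have hua : u ≤ a := hP1.1 hx
        have hub : b < u := lt_of_not_ge fun hc => (not_le.2 hy) (hQ1.2 hc)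
        exact ⟨lt_of_le_of_lt (min_le_right a b) hub, le_trans hua (le_max_left _ _)⟩
      · have hub : u ≤ b := hQ1.1 hx
        have hua : a < u := lt_of_not_ge fun hc => (not_le.2 hy) (hP1.2 hc)
        exact ⟨lt_of_le_of_lt (min_le_left a b) hua, le_trans hub (le_max_right _ _)⟩
    · rintro ⟨hmin, hmax⟩
      rcases le_total a b with h | h
      · rw [min_eq_left h] at hmin
        rw [max_eq_right h] at hmax
        exact Or.inr ⟨hQ1.2 hmax, not_le.1 fun hc => absurd (hP1.1 hc) (not_le.2 hmin)⟩
      · rw [min_eq_right h] at hmin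
        rw [max_eq_left h] at hmax
        exact Or.inl ⟨hP1.2 hmax, not_le.1 fun hc => absurd (hQ1.1 hc) (not_le.2 hmin)⟩
  rw [hset, vol_Ioc_inter (le_min (cdf_nonneg P t) (cdf_nonneg Q t)) min_le_max
    (max_le (cdf_le_one P t) (cdf_le_one Q t))]
  congr 1
  rw [F_eq, F_eq, ← ha, ← hb, max_sub_min_eq_abs, abs_sub_comm]

end W1Aux

namespace W1Aux

lemma coupling_value {P Q : Measure ℝ} [IsProbabilityMeasure P] [IsProbabilityMeasure Q]
    (hP : Integrable id P) (hQ : Integrable id Q)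
    (π : Measure (ℝ × ℝ)) [IsProbabilityMeasure π]
    (h1 : π.map Prod.fst = P) (h2 : π.map Prod.snd = Q) :
    (∫ p, |p.1 - p.2| ∂π) = (∫⁻ t, π (Sd t)).toReal ∧ (∫⁻ t, π (Sd t)) ≠ ⊤ := by
  have hi1 : Integrable (fun p : ℝ × ℝ => p.1) π := by
    have h : Integrable id (π.map Prod.fst) := h1 ▸ hP
    exact (integrable_map_measure aestronglyMeasurable_id measurable_fst.aemeasurable).1 h
  have hi2 : Integrable (fun p : ℝ × ℝ => p.2) π := by
    have h : Integrable id (π.map Prod.snd) := h2 ▸ hQ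
    exact (integrable_map_measure aestronglyMeasurable_id measurable_snd.aemeasurable).1 h
  have hint : Integrable (fun p : ℝ × ℝ => |p.1 - p.2|) π := (hi1.sub hi2).abs
  have hfin : (∫⁻ p, ENNReal.ofReal |p.1 - p.2| ∂π) ≠ ⊤ := by
    have h := hint.2
    rw [HasFiniteIntegral] at h
    refine ne_of_lt (lt_of_le_of_lt (le_of_eq ?_) h)
    exact lintegral_congr fun p => by
      simp [Real.enorm_eq_ofReal_abs, abs_abs]
  constructor
  · rw [integral_eq_lintegral_of_nonneg_ae (ae_of_all _ fun p => abs_nonneg _)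
      hint.1, key π]
  · rw [← key π]; exact hfin

end W1Aux

open W1Aux in
theorem stmt1 (P Q : Measure ℝ) [IsProbabilityMeasure P] [IsProbabilityMeasure Q]
    (hP : Integrable id P) (hQ : Integrable id Q) :
    W1 P Q = ∫ t, |F P t - F Q t| := by
  have hmono : Measurable fun t => |F P t - F Q t| :=
    ((F_mono (μ := P)).measurable.sub (F_mono (μ := Q)).measurable).abs
  set ν := volume.restrict (Ioo (0:ℝ) 1) with hν
  have hpair : AEMeasurable (fun u => (G P u, G Q u)) ν :=
    G_aemeasurable.prodMk G_aemeasurable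
  set π₀ := ν.map (fun u => (G P u, G Q u)) with hπ₀
  haveI : IsProbabilityMeasure π₀ := Measure.isProbabilityMeasure_map hpair
  have hm1 : π₀.map Prod.fst = P := by
    rw [hπ₀, AEMeasurable.map_map_of_aemeasurable measurable_fst.aemeasurable hpair]
    exact map_G
  have hm2 : π₀.map Prod.snd = Q := by
    rw [hπ₀, AEMeasurable.map_map_of_aemeasurable measurable_snd.aemeasurable hpair]
    exact map_G
  have hv0 := coupling_value hP hQ π₀ hm1 hm2
  have hq : ∀ t, π₀ (Sd t) = ENNReal.ofReal |F P t - F Q t| := fun t => quantile_Sd t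
  have hc : ∫ t, |F P t - F Q t| = (∫⁻ t, ENNReal.ofReal |F P t - F Q t|).toReal :=
    integral_eq_lintegral_of_nonneg_ae (ae_of_all _ fun t => abs_nonneg _)
      hmono.aestronglyMeasurable
  have hval₀ : ∫ p, |p.1 - p.2| ∂π₀ = ∫ t, |F P t - F Q t| := by
    rw [hv0.1, hc, lintegral_congr hq]
  haveI : Nonempty {π : Measure (ℝ × ℝ) // π.map Prod.fst = P ∧ π.map Prod.snd = Q} :=
    ⟨⟨π₀, hm1, hm2⟩⟩
  rw [W1]
  refine le_antisymm ?_ ?_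
  · refine le_trans (ciInf_le ?_ ⟨π₀, hm1, hm2⟩) (le_of_eq hval₀)
    refine ⟨0, ?_⟩
    rintro x ⟨π, rfl⟩
    exact integral_nonneg fun p => abs_nonneg _
  · refine le_ciInf fun π => ?_
    obtain ⟨π, hπ1, hπ2⟩ := π
    haveI : IsProbabilityMeasure π := ⟨by
      have h := congrArg (fun m : Measure ℝ => m univ) hπ1
      simpa [Measure.map_apply measurable_fst MeasurableSet.univ] using h⟩
    have hv := coupling_value hP hQ π hπ1 hπ2
    show ∫ t, |F P t - F Q t| ≤ ∫ p, |p.1 - p.2| ∂π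
    rw [hc, hv.1]
    exact ENNReal.toReal_mono hv.2 (lintegral_mono fun t => coupling_Sd_ge π hπ1 hπ2 t)
end

section
/- (Total coverage gap bound via Jensen) Let S_c = (S_1,…,S_n) be an i.i.d. sample from a distribution P on ℝ and let Q_α(S_c) denote the empirical (1−α)-quantile of the sample. Define Δ(α) = |E_{S_c}[F_P(Q_α(S_c)) − F_Q(Q_α(S_c))]|. Then ∫_0^1 Δ(α) dα ≤ E_{S∼P}[|F_P(S) − F_Q(S)|]. -/
open MeasureTheory Set
open scoped Classical

/-- Empirical `(1−α)`-quantile of a sample `s` of size `n`. -/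
noncomputable def empQuantile {n : ℕ} (s : Fin n → ℝ) (α : ℝ) : ℝ :=
  sInf {t : ℝ | 1 - α ≤ ((Finset.univ.filter fun i => s i ≤ t).card : ℝ) / (n : ℝ)}

/-! ### Auxiliary definitions and lemmas -/

/-- The `k`-th order statistic of the sample `s` (k ranging in `1..n`). -/
noncomputable def osK {n : ℕ} (s : Fin n → ℝ) (k : ℕ) : ℝ :=
  sInf {t : ℝ | (k : ℝ) ≤ ((Finset.univ.filter fun i => s i ≤ t).card : ℝ)}

/-- The difference of the two CDFs. -/
noncomputable def gg (P Q : Measure ℝ) (t : ℝ) : ℝ := F P t - F Q t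

section CDF

lemma F_mono (μ : Measure ℝ) [IsProbabilityMeasure μ] : Monotone (F μ) := by
  intro a b hab
  unfold F
  apply ENNReal.toReal_mono (measure_ne_top μ _)
  exact measure_mono (Iic_subset_Iic.mpr hab)

lemma F_meas (μ : Measure ℝ) [IsProbabilityMeasure μ] : Measurable (F μ) :=
  (F_mono μ).measurable

lemma F_le_one (μ : Measure ℝ) [IsProbabilityMeasure μ] (t : ℝ) : F μ t ≤ 1 := by
  unfold F
  rw [← ENNReal.toReal_one]
  exact ENNReal.toReal_mono ENNReal.one_ne_top prob_le_one

lemma F_nonneg (μ : Measure ℝ) (t : ℝ) : 0 ≤ F μ t := ENNReal.toReal_nonneg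

lemma gg_meas (P Q : Measure ℝ) [IsProbabilityMeasure P] [IsProbabilityMeasure Q] :
    Measurable (gg P Q) := (F_meas P).sub (F_meas Q)

lemma gg_abs_le_one (P Q : Measure ℝ) [IsProbabilityMeasure P] [IsProbabilityMeasure Q]
    (t : ℝ) : |gg P Q t| ≤ 1 := by
  have h1 := F_le_one P t
  have h2 := F_le_one Q t
  have h3 := F_nonneg P t
  have h4 := F_nonneg Q t
  rw [gg, abs_sub_le_iff]
  constructor <;> linarith

end CDF

section Count
variable {n : ℕ}

lemma cnt_mono (s : Fin n → ℝ) {t t' : ℝ} (h : t ≤ t') :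
    (Finset.univ.filter fun i => s i ≤ t).card ≤ (Finset.univ.filter fun i => s i ≤ t').card := by
  apply Finset.card_le_card
  apply Finset.monotone_filter_right
  intro i _ hi
  exact le_trans hi h

lemma cntSet_nonempty (s : Fin n → ℝ) {k : ℕ} (hkn : k ≤ n) (hn : 0 < n) :
    {t : ℝ | (k : ℝ) ≤ ((Finset.univ.filter fun i => s i ≤ t).card : ℝ)}.Nonempty := by
  have hne : (Finset.univ : Finset (Fin n)).Nonempty := by
    simpa [Finset.univ_nonempty_iff] using Fin.pos_iff_nonempty.mp hn
  refine ⟨Finset.univ.sup' hne s, ?_⟩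
  have : (Finset.univ.filter fun i => s i ≤ Finset.univ.sup' hne s) = Finset.univ := by
    apply Finset.filter_true_of_mem
    intro i _
    exact Finset.le_sup' s (Finset.mem_univ i)
  simp only [Set.mem_setOf_eq, this, Finset.card_univ, Fintype.card_fin]
  exact_mod_cast hkn

lemma cntSet_bddBelow (s : Fin n → ℝ) {k : ℕ} (hk1 : 1 ≤ k) (hn : 0 < n) :
    BddBelow {t : ℝ | (k : ℝ) ≤ ((Finset.univ.filter fun i => s i ≤ t).card : ℝ)} := by
  have hne : (Finset.univ : Finset (Fin n)).Nonempty := by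
    simpa [Finset.univ_nonempty_iff] using Fin.pos_iff_nonempty.mp hn
  refine ⟨Finset.univ.inf' hne s, ?_⟩
  intro t ht
  simp only [Set.mem_setOf_eq] at ht
  have hcard : 1 ≤ (Finset.univ.filter fun i => s i ≤ t).card := by
    have : (1 : ℝ) ≤ ((Finset.univ.filter fun i => s i ≤ t).card : ℝ) := by
      calc (1:ℝ) ≤ (k:ℝ) := by exact_mod_cast hk1
        _ ≤ _ := ht
    exact_mod_cast this
  obtain ⟨i, hi⟩ := Finset.card_pos.mp hcard
  have hi' := Finset.mem_filter.mp hi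
  exact le_trans (Finset.inf'_le s (Finset.mem_univ i)) hi'.2

lemma csInf_mem_cntSet (s : Fin n → ℝ) {k : ℕ} (hk1 : 1 ≤ k) (hkn : k ≤ n) (hn : 0 < n) :
    sInf {t : ℝ | (k : ℝ) ≤ ((Finset.univ.filter fun i => s i ≤ t).card : ℝ)}
      ∈ {t : ℝ | (k : ℝ) ≤ ((Finset.univ.filter fun i => s i ≤ t).card : ℝ)} := by
  set A := {t : ℝ | (k : ℝ) ≤ ((Finset.univ.filter fun i => s i ≤ t).card : ℝ)} with hA
  have hne := cntSet_nonempty s hkn hn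
  have hbdd := cntSet_bddBelow s hk1 hn
  set m := sInf A with hm
  obtain ⟨δ, hδpos, hδ⟩ : ∃ δ : ℝ, 0 < δ ∧ ∀ i, s i ≤ m ∨ m + δ ≤ s i := by
    by_cases hT : (Finset.univ.filter fun i => m < s i).Nonempty
    · refine ⟨(Finset.univ.filter fun i => m < s i).inf' hT s - m, ?_, ?_⟩
      · have : m < (Finset.univ.filter fun i => m < s i).inf' hT s := by
          rw [Finset.lt_inf'_iff]
          intro i hi
          exact (Finset.mem_filter.mp hi).2
        linarith
      · intro i
        rcases le_or_gt (s i) m with h | h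
        · exact Or.inl h
        · right
          have : (Finset.univ.filter fun j => m < s j).inf' hT s ≤ s i :=
            Finset.inf'_le s (Finset.mem_filter.mpr ⟨Finset.mem_univ i, h⟩)
          linarith
    · refine ⟨1, one_pos, fun i => Or.inl ?_⟩
      by_contra h
      exact hT ⟨i, Finset.mem_filter.mpr ⟨Finset.mem_univ i, lt_of_not_ge h⟩⟩
  obtain ⟨t, htA, htlt⟩ : ∃ t ∈ A, t < m + δ := by
    have : sInf A < m + δ := by rw [← hm]; linarith
    exact exists_lt_of_csInf_lt hne this
  have hmt : m ≤ t := csInf_le hbdd htA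
  have hfeq : (Finset.univ.filter fun i => s i ≤ t) = (Finset.univ.filter fun i => s i ≤ m) := by
    apply Finset.filter_congr
    intro i _
    constructor
    · intro hit
      rcases hδ i with h | h
      · exact h
      · exfalso; linarith
    · intro him; exact le_trans him hmt
  simpa [hA, Set.mem_setOf_eq, hfeq] using htA

lemma cntSet_le_iff (s : Fin n → ℝ) {k : ℕ} (hk1 : 1 ≤ k) (hkn : k ≤ n) (hn : 0 < n) (a : ℝ) :
    sInf {t : ℝ | (k : ℝ) ≤ ((Finset.univ.filter fun i => s i ≤ t).card : ℝ)} ≤ a ↔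
      (k : ℝ) ≤ ((Finset.univ.filter fun i => s i ≤ a).card : ℝ) := by
  constructor
  · intro h
    have hmem := csInf_mem_cntSet s hk1 hkn hn
    simp only [Set.mem_setOf_eq] at hmem
    calc (k : ℝ) ≤ _ := hmem
      _ ≤ _ := by exact_mod_cast cnt_mono s h
  · intro h
    exact csInf_le (cntSet_bddBelow s hk1 hn) h

lemma cnt_meas (a : ℝ) :
    Measurable (fun s : Fin n → ℝ => (Finset.univ.filter fun i => s i ≤ a).card) := by
  have : (fun s : Fin n → ℝ => (Finset.univ.filter fun i => s i ≤ a).card)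
      = fun s => ∑ i : Fin n, if s i ≤ a then 1 else 0 := by
    funext s
    rw [Finset.card_filter]
  rw [this]
  apply Finset.measurable_sum
  intro i _
  have hset : MeasurableSet {s : Fin n → ℝ | s i ≤ a} :=
    measurableSet_le (measurable_pi_apply i) measurable_const
  exact Measurable.ite hset measurable_const measurable_const

end Count

section OrderStat
variable {n : ℕ}

lemma osK_meas {k : ℕ} (hk1 : 1 ≤ k) (hkn : k ≤ n) (hn : 0 < n) :
    Measurable (fun s : Fin n → ℝ => osK s k) := by
  apply measurable_of_Iic
  intro a
  have : (fun s : Fin n → ℝ => osK s k) ⁻¹' Iic a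
      = {s : Fin n → ℝ | k ≤ (Finset.univ.filter fun i => s i ≤ a).card} := by
    ext s
    simp only [Set.mem_preimage, Set.mem_Iic, Set.mem_setOf_eq]
    rw [osK, cntSet_le_iff s hk1 hkn hn a]
    exact Nat.cast_le
  rw [this]
  exact measurableSet_le measurable_const (cnt_meas a)

lemma cnt_perm (s : Fin n → ℝ) (σ : Equiv.Perm (Fin n)) (t : ℝ) :
    (Finset.univ.filter fun i => (s ∘ σ) i ≤ t).card
      = (Finset.univ.filter fun i => s i ≤ t).card := by
  rw [← Fintype.card_subtype, ← Fintype.card_subtype]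
  exact Fintype.card_congr (σ.subtypeEquiv fun i => Iff.rfl)

lemma cntSet_monotone_eq (v : Fin n → ℝ) (hv : Monotone v) {k : ℕ} (hk1 : 1 ≤ k) (hkn : k ≤ n) :
    {t : ℝ | (k : ℝ) ≤ ((Finset.univ.filter fun i => v i ≤ t).card : ℝ)}
      = Ici (v ⟨k - 1, by omega⟩) := by
  ext t
  have h := Tuple.lt_card_le_iff_apply_le_of_monotone (f := v) (a := t) (j := ⟨k - 1, by omega⟩) hv
  simp only [Set.mem_setOf_eq, Set.mem_Ici]
  rw [← h]
  have hcard : Fintype.card {i // v i ≤ t} = (Finset.univ.filter fun i => v i ≤ t).card :=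
    Fintype.card_subtype _
  constructor
  · intro hle
    have : k ≤ (Finset.univ.filter fun i => v i ≤ t).card := by exact_mod_cast hle
    simp only [Fin.lt_iff_val_lt_val]
    omega
  · intro hlt
    simp only [Fin.lt_iff_val_lt_val] at hlt
    have : k ≤ (Finset.univ.filter fun i => v i ≤ t).card := by omega
    exact_mod_cast this

lemma osK_eq_sorted (s : Fin n → ℝ) {k : ℕ} (hk1 : 1 ≤ k) (hkn : k ≤ n) :
    osK s k = (s ∘ Tuple.sort s) ⟨k - 1, by omega⟩ := by
  unfold osK
  have hperm : ∀ t : ℝ, ((Finset.univ.filter fun i => s i ≤ t).card : ℝ)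
      = ((Finset.univ.filter fun i => (s ∘ Tuple.sort s) i ≤ t).card : ℝ) := by
    intro t; exact_mod_cast (cnt_perm s (Tuple.sort s) t).symm
  simp_rw [hperm]
  rw [cntSet_monotone_eq _ (Tuple.monotone_sort s) hk1 hkn, csInf_Ici]

lemma sum_osK (s : Fin n → ℝ) (h : ℝ → ℝ) :
    ∑ i ∈ Finset.range n, h (osK s (i + 1)) = ∑ i : Fin n, h (s i) := by
  rw [← Fin.sum_univ_eq_sum_range (fun i => h (osK s (i + 1)))]
  have heq : ∀ i : Fin n, h (osK s (i.1 + 1)) = h ((s ∘ Tuple.sort s) i) := by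
    intro i
    rw [osK_eq_sorted s (by omega : 1 ≤ i.1 + 1) (by omega : i.1 + 1 ≤ n)]
    congr 1
  rw [Finset.sum_congr rfl (fun i _ => heq i)]
  exact Fintype.sum_equiv (Tuple.sort s) _ _ (fun i => rfl)

lemma empQuantile_eq_osK (s : Fin n → ℝ) {i : ℕ} (hi : i < n) {α : ℝ}
    (hα : α ∈ Ioo ((i : ℝ) / n) (((i : ℝ) + 1) / n)) :
    empQuantile s α = osK s (n - i) := by
  have hn0 : (0 : ℝ) < n := by
    have : 0 < n := by omega
    exact_mod_cast this
  obtain ⟨h1, h2⟩ := hα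
  have hl : (i : ℝ) < α * n := by rwa [div_lt_iff₀ hn0] at h1
  have hr : α * n < (i : ℝ) + 1 := by rwa [lt_div_iff₀ hn0] at h2
  have hcast : ((n - i : ℕ) : ℝ) = (n : ℝ) - i := by
    push_cast [Nat.cast_sub hi.le]
    ring
  unfold empQuantile osK
  congr 1
  ext t
  simp only [Set.mem_setOf_eq]
  constructor
  · intro h
    have hc1 : (1 - α) * n ≤ ((Finset.univ.filter fun j => s j ≤ t).card : ℝ) := by
      rwa [← le_div_iff₀ hn0]
    have hlt : ((n - i : ℕ) : ℝ) < ((Finset.univ.filter fun j => s j ≤ t).card : ℝ) + 1 := by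
      rw [hcast]; nlinarith
    have h2' : (n - i : ℕ) < (Finset.univ.filter fun j => s j ≤ t).card + 1 := by
      exact_mod_cast hlt
    have h3' : (n - i : ℕ) ≤ (Finset.univ.filter fun j => s j ≤ t).card := by omega
    exact_mod_cast h3'
  · intro h
    rw [hcast] at h
    have : (1 - α) * n ≤ ((Finset.univ.filter fun j => s j ≤ t).card : ℝ) := by nlinarith
    rwa [← le_div_iff₀ hn0] at this

end OrderStat

lemma pi_map_eval (P : Measure ℝ) [IsProbabilityMeasure P] (n : ℕ) (i : Fin n) :
    (Measure.pi fun _ : Fin n => P).map (fun s => s i) = P := by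
  ext A hA
  rw [Measure.map_apply (measurable_pi_apply i) hA]
  rw [show (fun s : Fin n → ℝ => s i) ⁻¹' A = Function.eval i ⁻¹' A from rfl,
    Set.eval_preimage, Measure.pi_pi]
  rw [Finset.prod_eq_single i]
  · simp
  · intro j _ hj
    simp [Function.update_of_ne hj]
  · simp

theorem stmt5 (P Q : Measure ℝ) [IsProbabilityMeasure P] [IsProbabilityMeasure Q]
    (n : ℕ) (hn : 0 < n) :
    (∫ α in (0:ℝ)..1,
        |∫ s, (F P (empQuantile s α) - F Q (empQuantile s α))
            ∂(Measure.pi fun _ : Fin n => P)|)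
      ≤ ∫ t, |F P t - F Q t| ∂P := by
  have hn0 : (0 : ℝ) < n := by exact_mod_cast hn
  set μ : Measure (Fin n → ℝ) := Measure.pi fun _ : Fin n => P with hμdef
  haveI : IsProbabilityMeasure μ := by rw [hμdef]; infer_instance
  show (∫ α in (0:ℝ)..1, |∫ s, gg P Q (empQuantile s α) ∂μ|) ≤ ∫ t, |gg P Q t| ∂P
  have hgmeas : Measurable (gg P Q) := gg_meas P Q
  have hgbd := gg_abs_le_one P Q
  -- measurability and integrability of the order-statistic integrands
  have hosm : ∀ i : ℕ, i < n → Measurable fun s : Fin n → ℝ => osK s (n - i) :=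
    fun i hi => osK_meas (by omega) (by omega) hn
  have hintg : ∀ i : ℕ, i < n → Integrable (fun s => gg P Q (osK s (n - i))) μ := by
    intro i hi
    refine Integrable.mono' (integrable_const 1)
      ((hgmeas.comp (hosm i hi)).aestronglyMeasurable) ?_
    exact ae_of_all _ fun s => by simpa [Real.norm_eq_abs] using hgbd _
  -- the partition points
  set a : ℕ → ℝ := fun i => (i : ℝ) / n with hadef
  have hmono : ∀ i : ℕ, a i ≤ a (i + 1) := by
    intro i
    simp only [hadef]
    gcongr
    omega
  set G : ℝ → ℝ := fun α => |∫ s, gg P Q (empQuantile s α) ∂μ| with hGdef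
  have hpiece : ∀ i : ℕ, i < n → ∀ α ∈ Ioo (a i) (a (i + 1)),
      G α = |∫ s, gg P Q (osK s (n - i)) ∂μ| := by
    intro i hi α hα
    have hq : ∀ s : Fin n → ℝ, empQuantile s α = osK s (n - i) := by
      intro s
      apply empQuantile_eq_osK s hi
      simp only [hadef] at hα
      push_cast at hα
      exact hα
    simp only [hGdef, hq]
  have haeeq : ∀ i : ℕ, i < n →
      G =ᵐ[volume.restrict (Ioc (a i) (a (i + 1)))]
        fun _ => |∫ s, gg P Q (osK s (n - i)) ∂μ| := by
    intro i hi
    have h1 : ∀ᵐ α ∂volume.restrict (Ioc (a i) (a (i + 1))), α ∈ Ioc (a i) (a (i + 1)) :=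
      ae_restrict_mem measurableSet_Ioc
    have h2 : ∀ᵐ α : ℝ ∂volume.restrict (Ioc (a i) (a (i + 1))), α ≠ a (i + 1) := by
      apply ae_restrict_of_ae
      rw [ae_iff]
      have : {α : ℝ | ¬α ≠ a (i + 1)} = {a (i + 1)} := by
        ext x; simp [not_not]
      rw [this]
      exact Real.volume_singleton
    filter_upwards [h1, h2] with α hα hne
    exact hpiece i hi α ⟨hα.1, lt_of_le_of_ne hα.2 hne⟩
  have hii : ∀ i : ℕ, i < n → IntervalIntegrable G volume (a i) (a (i + 1)) := by
    intro i hi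
    rw [intervalIntegrable_iff_integrableOn_Ioc_of_le (hmono i)]
    exact (integrableOn_const measure_Ioc_lt_top.ne).congr ((haeeq i hi).symm)
  have hval : ∀ i : ℕ, i < n →
      (∫ α in a i..a (i + 1), G α) = (1 / (n : ℝ)) * |∫ s, gg P Q (osK s (n - i)) ∂μ| := by
    intro i hi
    rw [intervalIntegral.integral_of_le (hmono i), integral_congr_ae (haeeq i hi),
      setIntegral_const, measureReal_def, Real.volume_Ioc, smul_eq_mul]
    congr 1
    rw [ENNReal.toReal_ofReal (by linarith [hmono i])]
    simp only [hadef]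
    push_cast
    field_simp
    ring
  have ha0 : a 0 = 0 := by simp [hadef]
  have han : a n = 1 := by
    simp only [hadef]
    exact div_self hn0.ne'
  have hsplit : (∫ α in (0:ℝ)..1, G α) = ∑ i ∈ Finset.range n, ∫ α in a i..a (i + 1), G α := by
    rw [intervalIntegral.sum_integral_adjacent_intervals (fun k hk => hii k hk), ha0, han]
  rw [hsplit]
  have hle : ∀ i ∈ Finset.range n,
      (∫ α in a i..a (i + 1), G α) ≤ (1 / (n : ℝ)) * ∫ s, |gg P Q (osK s (n - i))| ∂μ := by
    intro i hi
    rw [hval i (Finset.mem_range.mp hi)]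
    apply mul_le_mul_of_nonneg_left ?_ (by positivity)
    simpa [Real.norm_eq_abs] using
      norm_integral_le_integral_norm (μ := μ) (fun s => gg P Q (osK s (n - i)))
  refine le_trans (Finset.sum_le_sum hle) ?_
  have hmarg : ∀ i : Fin n, (∫ s, |gg P Q (s i)| ∂μ) = ∫ t, |gg P Q t| ∂P := by
    intro i
    have hmap : (∫ t, |gg P Q t| ∂((Measure.pi fun _ : Fin n => P).map (fun s => s i)))
        = ∫ s, |gg P Q (s i)| ∂(Measure.pi fun _ : Fin n => P) := by
      apply integral_map (measurable_pi_apply i).aemeasurable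
      rw [pi_map_eval]
      exact hgmeas.abs.aestronglyMeasurable
    rw [hμdef, ← hmap, pi_map_eval]
  have hinteval : ∀ i : Fin n, Integrable (fun s : Fin n → ℝ => |gg P Q (s i)|) μ := by
    intro i
    refine Integrable.mono' (integrable_const 1)
      ((hgmeas.abs.comp (measurable_pi_apply i)).aestronglyMeasurable) ?_
    exact ae_of_all _ fun s => by simpa [abs_abs, Real.norm_eq_abs] using hgbd (s i)
  have hsum : ∑ i ∈ Finset.range n, (1 / (n : ℝ)) * ∫ s, |gg P Q (osK s (n - i))| ∂μ
      = ∫ t, |gg P Q t| ∂P := by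
    rw [← Finset.mul_sum,
      ← integral_finset_sum _ (fun i hi => (hintg i (Finset.mem_range.mp hi)).abs)]
    have hpt : ∀ s : Fin n → ℝ,
        (∑ i ∈ Finset.range n, |gg P Q (osK s (n - i))|) = ∑ i : Fin n, |gg P Q (s i)| := by
      intro s
      rw [← sum_osK s (fun t => |gg P Q t|),
        ← Finset.sum_range_reflect (fun j => |gg P Q (osK s (j + 1))|) n]
      apply Finset.sum_congr rfl
      intro j hj
      have hj' := Finset.mem_range.mp hj
      have hjj : n - 1 - j + 1 = n - j := by omega
      rw [hjj]
    simp_rw [hpt]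
    rw [integral_finset_sum _ (fun i _ => hinteval i)]
    simp_rw [hmarg]
    rw [Finset.sum_const, Finset.card_univ, Fintype.card_fin, nsmul_eq_mul]
    field_simp
  rw [hsum]
end
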